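/- For $n \ge 1$ and $u > 0$, $\int_0^u \int_0^{u-a_1} \cdots \int_0^{u - a_1 - \cdots - a_{n-1}} \prod_{i=1}^{n} \frac{a_i}{\sum_{j=i}^{n} a_j}\ da_n \cdots da_1 = \frac{u^n}{(n!)^2}$. -/

import Mathlib

open MeasureTheory Finset


lemma perm_sum_eq_one : ∀ (n : ℕ) (a : Fin n → ℝ), (∀ i, 0 < a i) →
    ∑ σ : Equiv.Perm (Fin n), ∏ i, a (σ i) / ∑ j ∈ Finset.univ.filter (fun j => i ≤ j), a (σ j) = 1 := by
  intro n
  induction n with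
  | zero => intro a ha; simp
  | succ n ih =>
    intro a ha
    have hS : 0 < ∑ j, a j := Finset.sum_pos (fun j _ => ha j) ⟨0, Finset.mem_univ 0⟩
    rw [← Equiv.sum_comp (Equiv.Perm.decomposeFin.symm) , Fintype.sum_prod_type]
    have key : ∀ (p : Fin (n+1)) (τ : Equiv.Perm (Fin n)),
        (∏ i, a (Equiv.Perm.decomposeFin.symm (p, τ) i) /
          ∑ j ∈ Finset.univ.filter (fun j => i ≤ j), a (Equiv.Perm.decomposeFin.symm (p, τ) j))
        = (a p / ∑ j, a j) *
          ∏ i : Fin n, (fun k => a (Equiv.swap 0 p k.succ)) (τ i) /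
            ∑ j ∈ Finset.univ.filter (fun j => i ≤ j), (fun k => a (Equiv.swap 0 p k.succ)) (τ j) := by
      intro p τ
      set σ := Equiv.Perm.decomposeFin.symm (p, τ) with hσ
      rw [Fin.prod_univ_succ]
      congr 1
      · have h0 : σ 0 = p := Equiv.Perm.decomposeFin_symm_apply_zero p τ
        have hfil : Finset.univ.filter (fun j : Fin (n+1) => (0:Fin (n+1)) ≤ j) = Finset.univ := by
          apply Finset.filter_true_of_mem; intro j _; exact Fin.zero_le j
        rw [h0, hfil, Equiv.sum_comp σ]
      · apply Finset.prod_congr rfl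
        intro i _
        have hs : ∀ x : Fin n, σ x.succ = Equiv.swap 0 p ((τ x)).succ :=
          fun x => Equiv.Perm.decomposeFin_symm_apply_succ τ p x
        have hden : ∑ j ∈ Finset.univ.filter (fun j : Fin (n+1) => i.succ ≤ j), a (σ j)
            = ∑ j ∈ Finset.univ.filter (fun j : Fin n => i ≤ j), a (σ j.succ) := by
          rw [Finset.sum_filter, Finset.sum_filter, Fin.sum_univ_succ]
          simp [Fin.succ_le_succ_iff, Fin.le_zero_iff, Fin.succ_ne_zero]
        rw [hs i, hden]
        congr 1
        apply Finset.sum_congr rfl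
        intro j _
        rw [hs j]
    calc ∑ p : Fin (n+1), ∑ τ : Equiv.Perm (Fin n), ∏ i, a (Equiv.Perm.decomposeFin.symm (p, τ) i) /
          ∑ j ∈ Finset.univ.filter (fun j => i ≤ j), a (Equiv.Perm.decomposeFin.symm (p, τ) j)
        = ∑ p : Fin (n+1), (a p / ∑ j, a j) * 1 := by
          apply Finset.sum_congr rfl; intro p _
          simp_rw [key p]
          rw [← Finset.mul_sum, ih (fun k => a (Equiv.swap 0 p k.succ)) (fun k => ha _)]
      _ = 1 := by
          simp only [mul_one]
          rw [← Finset.sum_div, div_self hS.ne']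


lemma simplexSet_measurable (n : ℕ) (u : ℝ) :
    MeasurableSet {a : Fin n → ℝ | (∀ i, 0 ≤ a i) ∧ ∑ i, a i ≤ u} := by
  apply MeasurableSet.inter
  · show MeasurableSet {a : Fin n → ℝ | ∀ i, 0 ≤ a i}
    rw [Set.setOf_forall]
    exact MeasurableSet.iInter fun i => measurableSet_le measurable_const (measurable_pi_apply i)
  · exact measurableSet_le (Finset.measurable_sum _ fun i _ => measurable_pi_apply i)
      measurable_const

lemma simplex_volume : ∀ (n : ℕ) (u : ℝ), 0 ≤ u →
    MeasureTheory.volume {a : Fin n → ℝ | (∀ i, 0 ≤ a i) ∧ ∑ i, a i ≤ u}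
      = ENNReal.ofReal (u ^ n / n.factorial) := by
  intro n
  induction n with
  | zero =>
    intro u hu
    have : {a : Fin 0 → ℝ | (∀ i, 0 ≤ a i) ∧ ∑ i, a i ≤ u} = Set.univ := by
      ext a; simp [hu]
    rw [this]
    rw [MeasureTheory.volume_pi, Measure.pi_univ]
    simp
  | succ n ih =>
    intro u hu
    set e := MeasurableEquiv.piFinSuccAbove (fun _ : Fin (n+1) => ℝ) 0
    have hmp : MeasurePreserving e volume volume :=
      volume_preserving_piFinSuccAbove (fun _ : Fin (n+1) => ℝ) 0
    set B : Set (ℝ × (Fin n → ℝ)) :=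
      {p | 0 ≤ p.1 ∧ (∀ i, 0 ≤ p.2 i) ∧ p.1 + ∑ i, p.2 i ≤ u} with hB
    have hBm : MeasurableSet B := by
      apply MeasurableSet.inter
      · exact measurableSet_le measurable_const measurable_fst
      apply MeasurableSet.inter
      · show MeasurableSet {p : ℝ × (Fin n → ℝ) | ∀ i, 0 ≤ p.2 i}
        rw [Set.setOf_forall]
        exact MeasurableSet.iInter fun i =>
          measurableSet_le measurable_const (measurable_snd.eval)
      · exact measurableSet_le (measurable_fst.add (Finset.measurable_sum univ fun i _ =>
          (measurable_pi_apply i).comp measurable_snd)) measurable_const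
    have hpre : {a : Fin (n+1) → ℝ | (∀ i, 0 ≤ a i) ∧ ∑ i, a i ≤ u} = e ⁻¹' B := by
      ext a
      have he : e a = (a 0, fun j => a ((0 : Fin (n+1)).succAbove j)) := rfl
      simp only [Set.mem_setOf_eq, Set.mem_preimage, he, hB]
      rw [Fin.forall_fin_succ, Fin.sum_univ_succ]
      simp only [Fin.succAbove_zero]
      tauto
    rw [hpre, hmp.measure_preimage hBm.nullMeasurableSet, Measure.volume_eq_prod,
      Measure.prod_apply hBm]
    have hslice : ∀ t : ℝ, volume (Prod.mk t ⁻¹' B)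
        = Set.indicator (Set.Icc 0 u) (fun t => ENNReal.ofReal ((u - t) ^ n / n.factorial)) t := by
      intro t
      by_cases ht : t ∈ Set.Icc 0 u
      · rw [Set.indicator_of_mem ht]
        have : Prod.mk t ⁻¹' B = {b : Fin n → ℝ | (∀ i, 0 ≤ b i) ∧ ∑ i, b i ≤ u - t} := by
          ext b
          simp only [Set.mem_preimage, hB, Set.mem_setOf_eq]
          constructor
          · rintro ⟨_, h2, h3⟩; exact ⟨h2, by linarith⟩
          · rintro ⟨h2, h3⟩; exact ⟨ht.1, h2, by linarith⟩
        rw [this, ih (u - t) (by linarith [ht.2])]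
      · rw [Set.indicator_of_notMem ht]
        have : Prod.mk t ⁻¹' B = ∅ := by
          ext b
          simp only [Set.mem_preimage, hB, Set.mem_setOf_eq, Set.mem_empty_iff_false, iff_false]
          rintro ⟨h1, h2, h3⟩
          apply ht
          refine ⟨h1, ?_⟩
          have : 0 ≤ ∑ i, b i := Finset.sum_nonneg fun i _ => h2 i
          linarith
        rw [this]; simp
    simp_rw [hslice]
    rw [lintegral_indicator measurableSet_Icc]
    have hint : IntegrableOn (fun t => (u - t) ^ n / n.factorial) (Set.Icc 0 u) := by
      apply ContinuousOn.integrableOn_compact isCompact_Icc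
      fun_prop
    rw [← MeasureTheory.ofReal_integral_eq_lintegral_ofReal hint]
    · congr 1
      rw [MeasureTheory.integral_Icc_eq_integral_Ioc, ← intervalIntegral.integral_of_le hu]
      rw [intervalIntegral.integral_div]
      have : (∫ t in (0:ℝ)..u, (u - t) ^ n) = ∫ t in (0:ℝ)..u, t ^ n := by
        have := intervalIntegral.integral_comp_sub_left (a := (0:ℝ)) (b := u)
          (fun x => x ^ n) u
        simpa using this
      rw [this, integral_pow]
      rw [Nat.factorial_succ]
      push_cast
      field_simp
      simp
    · filter_upwards [MeasureTheory.ae_restrict_mem measurableSet_Icc] with t ht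
      show (0:ℝ) ≤ (u - t) ^ n / n.factorial
      exact div_nonneg (pow_nonneg (by linarith [ht.2]) n) (by positivity)


lemma piCongrLeft_const_apply {n : ℕ} (f : Fin n ≃ Fin n) (a : Fin n → ℝ) :
    (MeasurableEquiv.piCongrLeft (fun _ => ℝ) f) a = fun b => a (f.symm b) := by
  funext b
  simp [MeasurableEquiv.piCongrLeft, Equiv.piCongrLeft, Equiv.piCongrLeft'_symm]

lemma perm_integral (n : ℕ) (u : ℝ) (σ : Equiv.Perm (Fin n)) :
    (∫ a in {a : Fin n → ℝ | (∀ i, 0 ≤ a i) ∧ ∑ i, a i ≤ u},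
      ∏ i, a (σ i) / ∑ j ∈ Finset.univ.filter (fun j => i ≤ j), a (σ j))
    = ∫ a in {a : Fin n → ℝ | (∀ i, 0 ≤ a i) ∧ ∑ i, a i ≤ u},
      ∏ i, a i / ∑ j ∈ Finset.univ.filter (fun j => i ≤ j), a j := by
  set S := {a : Fin n → ℝ | (∀ i, 0 ≤ a i) ∧ ∑ i, a i ≤ u} with hS
  set T := MeasurableEquiv.piCongrLeft (fun _ : Fin n => ℝ) σ.symm with hT
  have hmp : MeasurePreserving T volume volume :=
    volume_measurePreserving_piCongrLeft (fun _ => ℝ) σ.symm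
  have hTa : ∀ a : Fin n → ℝ, T a = fun b => a (σ b) := by
    intro a; rw [hT, piCongrLeft_const_apply]; simp
  have hpre : T ⁻¹' S = S := by
    ext a
    simp only [Set.mem_preimage, hS, Set.mem_setOf_eq, hTa]
    constructor
    · rintro ⟨h1, h2⟩
      refine ⟨fun i => by simpa using h1 (σ.symm i), ?_⟩
      rwa [Equiv.sum_comp σ (fun i => a i)] at h2
    · rintro ⟨h1, h2⟩
      refine ⟨fun i => h1 _, ?_⟩
      rwa [Equiv.sum_comp σ (fun i => a i)]
  have := hmp.setIntegral_preimage_emb T.measurableEmbedding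
    (fun a => ∏ i, a i / ∑ j ∈ Finset.univ.filter (fun j => i ≤ j), a j) S
  rw [hpre] at this
  rw [← this]
  apply setIntegral_congr_fun (by
    exact (by
      apply MeasurableSet.inter
      · show MeasurableSet {a : Fin n → ℝ | ∀ i, 0 ≤ a i}
        rw [Set.setOf_forall]
        exact MeasurableSet.iInter fun i => measurableSet_le measurable_const (measurable_pi_apply i)
      · exact measurableSet_le (Finset.measurable_sum _ fun i _ => measurable_pi_apply i)
          measurable_const))
  intro a _
  simp only [hTa]

section
variable (n : ℕ) (u : ℝ)

lemma hSm : MeasurableSet {a : Fin n → ℝ | (∀ i, 0 ≤ a i) ∧ ∑ i, a i ≤ u} := by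
  apply MeasurableSet.inter
  · show MeasurableSet {a : Fin n → ℝ | ∀ i, 0 ≤ a i}
    rw [Set.setOf_forall]
    exact MeasurableSet.iInter fun i => measurableSet_le measurable_const (measurable_pi_apply i)
  · exact measurableSet_le (Finset.measurable_sum _ fun i _ => measurable_pi_apply i)
      measurable_const

lemma H_meas (σ : Equiv.Perm (Fin n)) :
    Measurable (fun a : Fin n → ℝ =>
      ∏ i, a (σ i) / ∑ j ∈ Finset.univ.filter (fun j => i ≤ j), a (σ j)) := by
  apply Finset.measurable_prod
  intro i _
  exact (measurable_pi_apply _).div (Finset.measurable_sum _ fun j _ => measurable_pi_apply _)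

lemma H_bound (σ : Equiv.Perm (Fin n)) (a : Fin n → ℝ) (ha : ∀ i, 0 ≤ a i) :
    (∏ i, a (σ i) / ∑ j ∈ Finset.univ.filter (fun j => i ≤ j), a (σ j)) ∈ Set.Icc (0:ℝ) 1 := by
  constructor
  · apply Finset.prod_nonneg
    intro i _
    exact div_nonneg (ha _) (Finset.sum_nonneg fun j _ => ha _)
  · apply Finset.prod_le_one
    · intro i _; exact div_nonneg (ha _) (Finset.sum_nonneg fun j _ => ha _)
    · intro i _
      rcases eq_or_lt_of_le (Finset.sum_nonneg (fun j _ => ha (σ j)) :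
          (0:ℝ) ≤ ∑ j ∈ Finset.univ.filter (fun j => i ≤ j), a (σ j)) with h | h
      · rw [← h, div_zero]; norm_num
      · rw [div_le_one h]
        exact Finset.single_le_sum (fun j _ => ha (σ j))
          (Finset.mem_filter.2 ⟨Finset.mem_univ i, le_refl i⟩)

lemma H_integrable (hu : 0 ≤ u) (σ : Equiv.Perm (Fin n)) :
    IntegrableOn (fun a : Fin n → ℝ =>
      ∏ i, a (σ i) / ∑ j ∈ Finset.univ.filter (fun j => i ≤ j), a (σ j))
      {a : Fin n → ℝ | (∀ i, 0 ≤ a i) ∧ ∑ i, a i ≤ u} := by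
  apply Measure.integrableOn_of_bounded (M := 1)
  · intro h
    have hsub : {a : Fin n → ℝ | (∀ i, 0 ≤ a i) ∧ ∑ i, a i ≤ u}
        ⊆ Set.pi Set.univ (fun _ : Fin n => Set.Icc 0 u) := by
      rintro a ⟨h1, h2⟩ i _
      refine ⟨h1 i, ?_⟩
      calc a i ≤ ∑ j, a j := Finset.single_le_sum (fun j _ => h1 j) (Finset.mem_univ i)
        _ ≤ u := h2
    have := measure_mono (μ := (volume : Measure (Fin n → ℝ))) hsub
    rw [h] at this
    simp only [volume_pi_pi, Real.volume_Icc, top_le_iff] at this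
    exact (by
      rw [Finset.prod_const] at this
      exact ENNReal.pow_ne_top ENNReal.ofReal_ne_top this)
  · exact (H_meas n σ).aestronglyMeasurable
  · filter_upwards [ae_restrict_mem (hSm n u)] with a ha
    have := H_bound n σ a ha.1
    rw [Real.norm_eq_abs, abs_le]
    exact ⟨by linarith [this.1], this.2⟩

lemma null_coord : volume {a : Fin n → ℝ | ∃ i, a i = 0} = 0 := by
  have : {a : Fin n → ℝ | ∃ i, a i = 0} = ⋃ i, {a : Fin n → ℝ | a i = 0} := by
    ext a; simp
  rw [this]
  apply measure_iUnion_null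
  intro i
  have h2 : {a : Fin n → ℝ | a i = 0}
      = Set.pi Set.univ (fun j => if j = i then ({0} : Set ℝ) else Set.univ) := by
    ext a
    simp only [Set.mem_setOf_eq, Set.mem_pi, Set.mem_univ, true_implies]
    constructor
    · intro h j
      by_cases hj : j = i
      · subst hj; simp [h]
      · simp [hj]
    · intro h
      have := h i
      simpa using this
  rw [h2, volume_pi_pi]
  apply Finset.prod_eq_zero (Finset.mem_univ i)
  simp

end

theorem integral_prod_ratio (n : ℕ) (hn : 1 ≤ n) (u : ℝ) (hu : 0 < u) :
    ∫ a in {a : Fin n → ℝ | (∀ i, 0 ≤ a i) ∧ ∑ i, a i ≤ u},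
      (∏ i, a i / ∑ j ∈ Finset.univ.filter (fun j => i ≤ j), a j)
      = u ^ n / (n.factorial : ℝ) ^ 2 := by
  set S := {a : Fin n → ℝ | (∀ i, 0 ≤ a i) ∧ ∑ i, a i ≤ u} with hSdef
  set I := ∫ a in S, ∏ i, a i / ∑ j ∈ Finset.univ.filter (fun j => i ≤ j), a j with hI
  have hfac : ((n.factorial : ℝ)) ≠ 0 := Nat.cast_ne_zero.2 n.factorial_ne_zero
  have key : (n.factorial : ℝ) * I
      = u ^ n / n.factorial := by
    have hsum : ∑ σ : Equiv.Perm (Fin n),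
        (∫ a in S, ∏ i, a (σ i) / ∑ j ∈ Finset.univ.filter (fun j => i ≤ j), a (σ j))
        = (n.factorial : ℝ) * I := by
      rw [Finset.sum_congr rfl (fun σ _ => perm_integral n u σ), Finset.sum_const,
        Finset.card_univ, nsmul_eq_mul, Fintype.card_perm, Fintype.card_fin]
    rw [← hsum]
    rw [← integral_finset_sum Finset.univ (fun σ _ => H_integrable n u hu.le σ)]
    have hae : ∀ᵐ a ∂(volume.restrict S),
        (∑ σ : Equiv.Perm (Fin n), ∏ i, a (σ i) /
          ∑ j ∈ Finset.univ.filter (fun j => i ≤ j), a (σ j)) = (1:ℝ) := by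
      have h0 : ∀ᵐ a ∂(volume : Measure (Fin n → ℝ)), a ∉ {a : Fin n → ℝ | ∃ i, a i = 0} :=
        (measure_eq_zero_iff_ae_notMem).1 (null_coord n)
      filter_upwards [ae_restrict_of_ae h0, ae_restrict_mem (hSm n u)] with a h1 h2
      apply perm_sum_eq_one
      intro i
      rcases eq_or_lt_of_le (h2.1 i) with h | h
      · exact absurd ⟨i, h.symm⟩ h1
      · exact h
    rw [integral_congr_ae hae, setIntegral_const, smul_eq_mul, mul_one,
      measureReal_def, simplex_volume n u hu.le, ENNReal.toReal_ofReal (by positivity)]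
  have : I = u ^ n / (n.factorial : ℝ) ^ 2 := by
    field_simp at key ⊢
    linarith
  exact this
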